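/- Let F = (F₁, F₂) and G = (G₁, G₂) be real-analytic maps ℝ² → ℝ² which both satisfy the para-complex Cauchy–Riemann equations ∂F₁/∂u = ∂F₂/∂v and ∂F₂/∂u = ∂F₁/∂v (and likewise for G) on all of ℝ². If F(u, 0) = G(u, 0) for all u ∈ ℝ, then F = G on all of ℝ². In particular, a real analytic function on ℝ has at most one 𝕃-analytic (real-analytic para-holomorphic) extension to ℝ². (Paper: uniqueness part of Lemma A.1.) -/

import Mathlib

private lemma const_along_line {H : ℝ × ℝ → ℝ} (hd : Differentiable ℝ H) (d : ℝ × ℝ)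
    (h : ∀ p, fderiv ℝ H p d = 0) (p : ℝ × ℝ) (t : ℝ) : H (p + t • d) = H p := by
  have hline : ∀ s : ℝ, HasDerivAt (fun s : ℝ => p + s • d) d s := fun s => by
    simpa using ((hasDerivAt_id s).smul_const d).const_add p
  have hg : ∀ s : ℝ, HasDerivAt (fun s : ℝ => H (p + s • d)) 0 s := fun s => by
    have := (hd _).hasFDerivAt.comp_hasDerivAt s (hline s)
    rw [h] at this
    exact this
  have := is_const_of_deriv_eq_zero (f := fun s : ℝ => H (p + s • d))
    (fun s => (hg s).differentiableAt) (fun s => (hg s).deriv) t 0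
  simpa using this

/-- **Uniqueness part of Lemma A.1.** Two real-analytic maps `ℝ² → ℝ²` satisfying the
para-complex Cauchy–Riemann equations which agree on the real axis agree everywhere; in
particular a real-analytic function on `ℝ` has at most one 𝕃-analytic extension. -/
theorem paraholomorphic_extension_unique
    (F G : ℝ × ℝ → ℝ × ℝ)
    (hF : AnalyticOnNhd ℝ F Set.univ) (hG : AnalyticOnNhd ℝ G Set.univ)
    (hFCR1 : ∀ p : ℝ × ℝ,
      fderiv ℝ (fun q => (F q).1) p (1, 0) = fderiv ℝ (fun q => (F q).2) p (0, 1))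
    (hFCR2 : ∀ p : ℝ × ℝ,
      fderiv ℝ (fun q => (F q).2) p (1, 0) = fderiv ℝ (fun q => (F q).1) p (0, 1))
    (hGCR1 : ∀ p : ℝ × ℝ,
      fderiv ℝ (fun q => (G q).1) p (1, 0) = fderiv ℝ (fun q => (G q).2) p (0, 1))
    (hGCR2 : ∀ p : ℝ × ℝ,
      fderiv ℝ (fun q => (G q).2) p (1, 0) = fderiv ℝ (fun q => (G q).1) p (0, 1))
    (hax : ∀ u : ℝ, F (u, 0) = G (u, 0)) :
    F = G := by
  have hF1 : Differentiable ℝ (fun q => (F q).1) := fun p => ((hF p trivial).differentiableAt).fst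
  have hF2 : Differentiable ℝ (fun q => (F q).2) := fun p => ((hF p trivial).differentiableAt).snd
  have hG1 : Differentiable ℝ (fun q => (G q).1) := fun p => ((hG p trivial).differentiableAt).fst
  have hG2 : Differentiable ℝ (fun q => (G q).2) := fun p => ((hG p trivial).differentiableAt).snd
  set P : ℝ × ℝ → ℝ := fun q => (F q).1 + (F q).2 - (G q).1 - (G q).2 with hPdef
  set Q : ℝ × ℝ → ℝ := fun q => (F q).1 - (F q).2 - (G q).1 + (G q).2 with hQdef
  have hPdiff : Differentiable ℝ P := ((hF1.add hF2).sub hG1).sub hG2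
  have hQdiff : Differentiable ℝ Q := ((hF1.sub hF2).sub hG1).add hG2
  have hPfd : ∀ p : ℝ × ℝ, HasFDerivAt P
      (fderiv ℝ (fun q => (F q).1) p + fderiv ℝ (fun q => (F q).2) p
        - fderiv ℝ (fun q => (G q).1) p - fderiv ℝ (fun q => (G q).2) p) p := fun p =>
    (((hF1 p).hasFDerivAt.add (hF2 p).hasFDerivAt).sub (hG1 p).hasFDerivAt).sub
      (hG2 p).hasFDerivAt
  have hQfd : ∀ p : ℝ × ℝ, HasFDerivAt Q
      (fderiv ℝ (fun q => (F q).1) p - fderiv ℝ (fun q => (F q).2) p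
        - fderiv ℝ (fun q => (G q).1) p + fderiv ℝ (fun q => (G q).2) p) p := fun p =>
    (((hF1 p).hasFDerivAt.sub (hF2 p).hasFDerivAt).sub (hG1 p).hasFDerivAt).add
      (hG2 p).hasFDerivAt
  have hsplit1 : ((1 : ℝ), (-1 : ℝ)) = ((1 : ℝ), (0 : ℝ)) - ((0 : ℝ), (1 : ℝ)) := by
    simp [Prod.ext_iff]
  have hsplit2 : ((1 : ℝ), (1 : ℝ)) = ((1 : ℝ), (0 : ℝ)) + ((0 : ℝ), (1 : ℝ)) := by
    simp [Prod.ext_iff]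
  have hP0 : ∀ p : ℝ × ℝ, fderiv ℝ P p ((1 : ℝ), (-1 : ℝ)) = 0 := by
    intro p
    rw [(hPfd p).fderiv, hsplit1, map_sub]
    simp only [ContinuousLinearMap.sub_apply, ContinuousLinearMap.add_apply]
    have h1 := hFCR1 p; have h2 := hFCR2 p; have h3 := hGCR1 p; have h4 := hGCR2 p
    linarith
  have hQ0 : ∀ p : ℝ × ℝ, fderiv ℝ Q p ((1 : ℝ), (1 : ℝ)) = 0 := by
    intro p
    rw [(hQfd p).fderiv, hsplit2, map_add]
    simp only [ContinuousLinearMap.sub_apply, ContinuousLinearMap.add_apply]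
    have h1 := hFCR1 p; have h2 := hFCR2 p; have h3 := hGCR1 p; have h4 := hGCR2 p
    linarith
  have haxP : ∀ u : ℝ, P (u, 0) = 0 := by
    intro u; have := hax u
    simp only [hPdef]
    rw [this]; ring
  have haxQ : ∀ u : ℝ, Q (u, 0) = 0 := by
    intro u; have := hax u
    simp only [hQdef]
    rw [this]; ring
  funext p
  obtain ⟨a, b⟩ := p
  have hP : P (a, b) = 0 := by
    have := const_along_line hPdiff ((1 : ℝ), (-1 : ℝ)) hP0 ((a + b, 0)) (-b)
    have he : ((a + b, 0) : ℝ × ℝ) + (-b) • ((1 : ℝ), (-1 : ℝ)) = (a, b) := by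
      simp [Prod.ext_iff]
    rw [he] at this
    rw [this, haxP]
  have hQ : Q (a, b) = 0 := by
    have := const_along_line hQdiff ((1 : ℝ), (1 : ℝ)) hQ0 ((a - b, 0)) b
    have he : ((a - b, 0) : ℝ × ℝ) + b • ((1 : ℝ), (1 : ℝ)) = (a, b) := by
      simp [Prod.ext_iff]
    rw [he] at this
    rw [this, haxQ]
  simp only [hPdef, hQdef] at hP hQ
  ext
  · linarith
  · linarith
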